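/- Let G be a connected graph with positive edge weights x_{km}, let B be its weighted Laplacian (B_{kk} = Σ_{km∈δ(k)} 1/x_{km}, B_{km} = -1/x_{km} for edges km, 0 otherwise). Suppose Bθ = P and B θ̂ = P + Γ(e_s − e_t) where Γ > 0 and e_s, e_t are standard unit vectors. If k ≠ t is a vertex such that G contains a path from s to k avoiding t, then θ̂_k − θ̂_t > θ_k − θ_t. -/
import Mathlib


open Matrix

/-- Lemma 1 (change): under the DC power flow model with one unit pair injection
Γ at s and -Γ at t (Γ > 0), any bus k ≠ t reachable from s by a path avoiding t
has its phase angle (relative to t) strictly increased. -/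
theorem stmt_0 {n : ℕ} (G : SimpleGraph (Fin n)) (hconn : G.Connected)
    (w : Fin n → Fin n → ℝ)
    (hsym : ∀ k m, w k m = w m k)
    (hpos : ∀ k m, G.Adj k m → 0 < w k m)
    (hzero : ∀ k m, ¬ G.Adj k m → w k m = 0)
    (B : Matrix (Fin n) (Fin n) ℝ)
    (hB : ∀ k m, B k m = if k = m then ∑ j, w k j else -(w k m))
    (θ θhat P : Fin n → ℝ) (s t : Fin n) (Γ : ℝ) (hΓ : 0 < Γ)
    (h1 : B.mulVec θ = P)
    (h2 : B.mulVec θhat = P + Γ • ((Pi.single s 1 : Fin n → ℝ) - Pi.single t 1))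
    (k : Fin n) (hk : k ≠ t)
    (hpath : ∃ p : G.Walk s k, t ∉ p.support) :
    θhat k - θhat t > θ k - θ t := by
  classical
  obtain ⟨p₀, hp₀⟩ := hpath
  have hst : s ≠ t := fun h => hp₀ (h ▸ p₀.start_mem_support)
  set u : Fin n → ℝ := θhat - θ with hu_def
  have hu : B.mulVec u = Γ • ((Pi.single s 1 : Fin n → ℝ) - Pi.single t 1) := by
    rw [hu_def, Matrix.mulVec_sub, h1, h2]
    abel
  have hww : ∀ j, w j j = 0 := fun j => hzero j j (G.irrefl)
  have hBu : ∀ j, ∑ m, w j m * (u j - u m)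
      = (if j = s then Γ else 0) - (if j = t then Γ else 0) := by
    intro j
    have h := congrFun hu j
    have hl : B.mulVec u j = ∑ m, B j m * u m := by
      simp [Matrix.mulVec, dotProduct]
    have hr : ((Γ • ((Pi.single s 1 : Fin n → ℝ) - Pi.single t 1)) : Fin n → ℝ) j
        = (if j = s then Γ else 0) - (if j = t then Γ else 0) := by
      simp only [Pi.smul_apply, Pi.sub_apply, Pi.single_apply, smul_eq_mul]
      split_ifs <;> ring
    rw [hl, hr] at h
    rw [← h]
    have step : ∀ m, B j m * u m
        = (if j = m then (∑ x, w j x) * u j else 0) - w j m * u m := by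
      intro m
      rw [hB]
      by_cases hm : j = m
      · subst hm; simp [hww j]
      · simp [hm]
    calc ∑ m, w j m * (u j - u m)
        = (∑ m, w j m) * u j - ∑ m, w j m * u m := by
          rw [Finset.sum_mul, ← Finset.sum_sub_distrib]
          exact Finset.sum_congr rfl (fun m _ => by ring)
      _ = (∑ m, if j = m then (∑ x, w j x) * u j else 0) - ∑ m, w j m * u m := by
          simp
      _ = ∑ m, B j m * u m := by
          rw [← Finset.sum_sub_distrib]
          exact Finset.sum_congr rfl (fun m _ => (step m).symm)
  set Rch : Fin n → Prop := fun j => ∃ q : G.Walk s j, t ∉ q.support with hRdef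
  have hRs : Rch s := ⟨SimpleGraph.Walk.nil, by simp [Ne.symm hst]⟩
  set S : Finset (Fin n) := insert t (Finset.univ.filter Rch) with hSdef
  have htS : t ∈ S := Finset.mem_insert_self _ _
  have hmemS : ∀ j, Rch j → j ∈ S := fun j hj =>
    Finset.mem_insert_of_mem (by simp [hj])
  have hRext : ∀ j m, Rch j → G.Adj j m → m ≠ t → Rch m := by
    intro j m hj hadj hmt
    obtain ⟨q, hq⟩ := hj
    refine ⟨q.concat hadj, ?_⟩
    rw [SimpleGraph.Walk.support_concat]
    simp [List.concat_eq_append, hq, Ne.symm hmt]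
  have hS : ∀ j m, Rch j → G.Adj j m → m ∈ S := by
    intro j m hj hadj
    by_cases hmt : m = t
    · subst hmt; exact htS
    · exact hmemS m (hRext j m hj hadj hmt)
  -- s cannot be a minimizer of u over S
  have hsmin : ¬ (∀ i ∈ S, u s ≤ u i) := by
    intro hmin
    have h1' := hBu s
    rw [if_pos rfl, if_neg hst] at h1'
    have hle : ∑ m, w s m * (u s - u m) ≤ 0 := by
      apply Finset.sum_nonpos
      intro m _
      by_cases hadj : G.Adj s m
      · have hw := hpos s m hadj
        have hm := hmin m (hS s m hRs hadj)
        nlinarith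
      · simp [hzero s m hadj]
    linarith
  -- a minimizer b ≠ t with Rch b forces all neighbors to have equal value
  have hstep : ∀ b, b ≠ t → Rch b → (∀ i ∈ S, u b ≤ u i) →
      ∀ a, G.Adj b a → u a = u b := by
    intro b hbt hRb hmin a hadj
    by_cases hbs : b = s
    · exact absurd (hbs ▸ hmin) hsmin
    · have h0 := hBu b
      rw [if_neg hbs, if_neg hbt, sub_zero] at h0
      have hnp : ∀ m ∈ Finset.univ, w b m * (u b - u m) ≤ 0 := by
        intro m _
        by_cases hadj' : G.Adj b m
        · have hw := hpos b m hadj'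
          have hm := hmin m (hS b m hRb hadj')
          nlinarith
        · simp [hzero b m hadj']
      have hz := (Finset.sum_eq_zero_iff_of_nonpos hnp).1 h0 a (Finset.mem_univ a)
      have hw := hpos b a hadj
      have : u b - u a = 0 := by
        by_contra hne
        exact hne (by nlinarith)
      linarith
  -- propagate a minimum backwards along a walk avoiding t
  have prop : ∀ (a c : Fin n) (q : G.Walk a c), t ∉ q.support → Rch a →
      (∀ i ∈ S, u c ≤ u i) → (∀ i ∈ S, u a ≤ u i) := by
    intro a c q
    induction q with
    | nil => intro _ _ h; exact h
    | @cons x y z h q ih =>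
      intro hts hRx hmin
      rw [SimpleGraph.Walk.support_cons] at hts
      have htq : t ∉ q.support := fun e => hts (List.mem_cons_of_mem _ e)
      have hyt : y ≠ t := fun e => htq (e ▸ q.start_mem_support)
      have hRy : Rch y := hRext x y hRx h hyt
      have hminy := ih htq hRy hmin
      have hxy : u x = u y := hstep y hyt hRy hminy x h.symm
      intro i hi
      rw [hxy]
      exact hminy i hi
  have hnotmin : ∀ j, Rch j → ¬ (∀ i ∈ S, u j ≤ u i) := by
    intro j hj hmin
    obtain ⟨q, hq⟩ := hj
    exact hsmin (prop s j q hq hRs hmin)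
  have hkR : Rch k := ⟨p₀, hp₀⟩
  obtain ⟨j0, hj0S, hj0⟩ := S.exists_min_image u ⟨t, htS⟩
  have hj0t : j0 = t := by
    rcases Finset.mem_insert.1 hj0S with h | h
    · exact h
    · exact absurd hj0 (hnotmin j0 (by simpa using h))
  have hjt : ∀ i ∈ S, u t ≤ u i := hj0t ▸ hj0
  have hut_le : u t ≤ u k := hjt k (hmemS k hkR)
  have hne : u k ≠ u t := by
    intro he
    exact hnotmin k hkR (fun i hi => he ▸ hjt i hi)
  have : u k > u t := lt_of_le_of_ne hut_le (Ne.symm hne)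
  have huk : u k = θhat k - θ k := rfl
  have hutv : u t = θhat t - θ t := rfl
  rw [huk, hutv] at this
  linarith
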